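/- For all integers m > 1 and n ≥ 1, every matching vector family in Z_m^n has size at most 100·m^{n/2 + 8.47}. -/

import Mathlib

open Finset

noncomputable section
set_option maxHeartbeats 1000000

namespace MVF

def ps (M : ℕ) (a : ℤ) : ℂ := Complex.exp (2 * Real.pi * Complex.I / M) ^ a
lemma ps_base_ne_zero (M : ℕ) : Complex.exp (2 * Real.pi * Complex.I / (M:ℂ)) ≠ 0 :=
  Complex.exp_ne_zero _
lemma ps_add (M : ℕ) (a b : ℤ) : ps M (a + b) = ps M a * ps M b :=
  zpow_add₀ (ps_base_ne_zero M) a b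
lemma ps_zero (M : ℕ) : ps M 0 = 1 := zpow_zero _
lemma ps_eq_one_iff (M : ℕ) (hM : M ≠ 0) (a : ℤ) : ps M a = 1 ↔ (M:ℤ) ∣ a :=
  (Complex.isPrimitiveRoot_exp M hM).zpow_eq_one_iff_dvd a
lemma ps_pow (M : ℕ) (a : ℤ) (b : ℕ) : (ps M a) ^ b = ps M (a * b) := by
  induction b with
  | zero => simp [ps_zero]
  | succ k ih => rw [pow_succ, ih, ← ps_add]; congr 1; push_cast; ring

/-- geometric sum -/
lemma ps_geom (M q : ℕ) (hM : M ≠ 0) (a : ℤ) (hq : (M:ℤ) ∣ a * q) :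
    ∑ c ∈ Finset.range q, (ps M a) ^ c = if (M:ℤ) ∣ a then (q:ℂ) else 0 := by
  by_cases h : (M:ℤ) ∣ a
  · simp only [h, if_true]
    rw [(ps_eq_one_iff M hM a).2 h]
    simp
  · simp only [h, if_false]
    have hne : ps M a ≠ 1 := fun hh => h ((ps_eq_one_iff M hM a).1 hh)
    rw [geom_sum_eq hne]
    have : (ps M a) ^ q = 1 := by rw [ps_pow]; exact (ps_eq_one_iff M hM _).2 hq
    rw [this]
    simp

lemma ps_detect (M : ℕ) (hM : M ≠ 0) (x : ℤ) :
    ∑ c ∈ Finset.range M, ps M (c * x) = if (M:ℤ) ∣ x then (M:ℂ) else 0 := by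
  have h1 : ∀ c : ℕ, ps M ((c:ℤ) * x) = (ps M x) ^ c := by
    intro c; rw [ps_pow]; congr 1; ring
  rw [Finset.sum_congr rfl fun c _ => h1 c]
  exact ps_geom M M hM x ⟨x, by ring⟩

lemma ps_sum {κ : Type*} (M : ℕ) (s : Finset κ) (f : κ → ℤ) :
    ps M (∑ k ∈ s, f k) = ∏ k ∈ s, ps M (f k) := by
  induction s using Finset.cons_induction with
  | empty => simp [ps_zero]
  | cons a s ha ih => rw [Finset.sum_cons, Finset.prod_cons, ps_add, ih]

lemma base_eq (M : ℕ) : (2 * Real.pi * Complex.I / (M:ℂ)) = (((2 * Real.pi / M : ℝ)):ℂ) * Complex.I := by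
  push_cast; ring

lemma ps_abs (M : ℕ) (a : ℤ) : ‖ps M a‖ = 1 := by
  unfold ps
  rw [norm_zpow, base_eq, Complex.norm_exp_ofReal_mul_I, one_zpow]

lemma ps_conj (M : ℕ) (a : ℤ) : (starRingEnd ℂ) (ps M a) = ps M (-a) := by
  have h1 : (starRingEnd ℂ) (Complex.exp (2 * Real.pi * Complex.I / M))
      = (Complex.exp (2 * Real.pi * Complex.I / M))⁻¹ := by
    rw [Complex.inv_eq_conj]
    rw [base_eq, Complex.norm_exp_ofReal_mul_I]
  unfold ps
  rw [map_zpow₀, h1, zpow_neg, inv_zpow]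

lemma ps_congr (M : ℕ) (hM : M ≠ 0) (a b : ℤ) (h : (M:ℤ) ∣ a - b) : ps M a = ps M b := by
  have h2 : ps M a = ps M (b + (a - b)) := by ring_nf
  rw [h2, ps_add, (ps_eq_one_iff M hM _).2 h, mul_one]

/-- A "pointed" matching-vector-like family mod `M` in dimension `n+2`:
coordinate 0 of all the `U`'s agree and coordinate 1 of all the `V`'s agree. -/
def Ph (n M t : ℕ) (U V : Fin t → Fin (n+2) → ℕ) : Prop :=
  (∀ i i', U i 0 = U i' 0) ∧ (∀ j j', V j 1 = V j' 1) ∧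
  (∀ i, (∑ k, U i k * V i k) % M = 0) ∧
  (∀ i j, i ≠ j → (∑ k, U i k * V j k) % M ≠ 0)

lemma Ph.swap {n M t : ℕ} {U V : Fin t → Fin (n+2) → ℕ} (h : Ph n M t U V) :
    Ph n M t (fun j k => V j (Equiv.swap 0 1 k)) (fun i k => U i (Equiv.swap 0 1 k)) := by
  obtain ⟨h1, h2, h3, h4⟩ := h
  have hswap : ∀ (i j : Fin t), (∑ k, V i (Equiv.swap 0 1 k) * U j (Equiv.swap 0 1 k))
      = ∑ k, U j k * V i k := by
    intro i j
    rw [Equiv.sum_comp (Equiv.swap (0 : Fin (n+2)) 1) (fun k => V i k * U j k)]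
    exact Finset.sum_congr rfl fun k _ => mul_comm _ _
  refine ⟨fun i i' => ?_, fun j j' => ?_, fun i => ?_, fun i j hij => ?_⟩
  · simp only [Equiv.swap_apply_left]; exact h2 i i'
  · simp only [Equiv.swap_apply_right]; exact h1 j j'
  · rw [hswap]; exact h3 i
  · rw [hswap]; exact h4 j i (Ne.symm hij)

lemma Ph.nonneg {n M : ℕ} {B : ℝ}
    (hIH : ∀ t' : ℕ, ∀ U' V' : Fin t' → Fin (n+2) → ℕ, Ph n M t' U' V' → (t' : ℝ) ≤ B) :
    0 ≤ B := by
  have := hIH 0 (fun a => a.elim0) (fun a => a.elim0)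
    ⟨fun i => i.elim0, fun j => j.elim0, fun i => i.elim0, fun i => i.elim0⟩
  simpa using this

/-- Class-reduction: a fiber of residues mod `q` of the `U`-side is itself
a pointed family modulo `M/q`. -/
lemma class_u {n M q t : ℕ} (hM : 0 < M) (hq : q ∣ M) (hq0 : 0 < q)
    (U V : Fin t → Fin (n+2) → ℕ) (h : Ph n M t U V)
    (x : Fin (n+2) → ℕ) (B : ℝ)
    (hIH : ∀ t' : ℕ, ∀ U' V' : Fin t' → Fin (n+2) → ℕ, Ph n (M/q) t' U' V' → (t' : ℝ) ≤ B) :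
    (((univ.filter fun i => ∀ k, U i k % q = x k)).card : ℝ) ≤ B := by
  classical
  obtain ⟨h1, h2, h3, h4⟩ := h
  set s := (univ.filter fun i => ∀ k, U i k % q = x k) with hs
  by_cases hcard : s.card = 0
  · rw [hcard]; exact_mod_cast Ph.nonneg hIH
  have hne : s.Nonempty := Finset.card_pos.mp (Nat.pos_of_ne_zero hcard)
  obtain ⟨i₀, hi₀⟩ := hne
  set M' := M / q with hM'
  have hqM' : q * M' = M := Nat.mul_div_cancel' hq
  have hM'0 : 0 < M' := by
    rcases Nat.eq_zero_or_pos M' with h0 | h0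
    · exfalso; rw [h0, mul_zero] at hqM'; omega
    · exact h0
  set α := U i₀ 0 with hα
  have hU0 : ∀ i, U i 0 = α := fun i => h1 i i₀
  set R : Fin (n+2) → ℕ := fun k => if k = 0 then α else x k with hR
  have hmem : ∀ i ∈ s, ∀ k, U i k % q = x k := by
    intro i hi; simpa [hs] using hi
  have hdecomp : ∀ i ∈ s, ∀ k, U i k = q * (if k = 0 then 0 else U i k / q) + R k := by
    intro i hi k
    by_cases hk : k = 0
    · simp [hk, hR, hU0 i]
    · simp only [hk, if_false, hR]
      rw [← hmem i hi k]
      exact (Nat.div_add_mod _ _).symm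
  set S : Fin t → ℕ := fun j => ∑ k, R k * V j k with hS
  have hRmod : ∀ j ∈ s, ∀ k, R k % q = U j k % q := by
    intro j hj k
    by_cases hk : k = 0
    · simp [hk, hR, hU0 j]
    · simp [hk, hR, ← hmem j hj k, Nat.mod_mod_of_dvd]
  have hSdvd : ∀ j ∈ s, q ∣ S j := by
    intro j hj
    have hIPd : q ∣ ∑ k, U j k * V j k :=
      dvd_trans hq (Nat.dvd_of_mod_eq_zero (h3 j))
    have hcong : S j % q = (∑ k, U j k * V j k) % q := by
      rw [hS]
      rw [Finset.sum_nat_mod, Finset.sum_nat_mod (f := fun k => U j k * V j k)]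
      congr 1
      refine Finset.sum_congr rfl fun k _ => ?_
      rw [Nat.mul_mod, hRmod j hj k, ← Nat.mul_mod]
    exact Nat.dvd_of_mod_eq_zero (by rw [hcong]; exact Nat.mod_eq_zero_of_dvd hIPd)
  -- the reduced family
  set ind : Fin s.card → Fin t := fun a => (s.equivFin.symm a : {z // z ∈ s}) with hind
  have hind_mem : ∀ a, ind a ∈ s := fun a => (s.equivFin.symm a).2
  have hind_inj : Function.Injective ind := by
    intro a b hab
    have := Subtype.ext (p := fun z => z ∈ s) hab
    exact s.equivFin.symm.injective this
  set U' : Fin s.card → Fin (n+2) → ℕ :=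
    fun a k => if k = 0 then 1 else U (ind a) k / q with hU'
  set V' : Fin s.card → Fin (n+2) → ℕ :=
    fun b k => if k = 0 then S (ind b) / q else V (ind b) k with hV'
  have hIP : ∀ a b, q * (∑ k, U' a k * V' b k) = ∑ k, U (ind a) k * V (ind b) k := by
    intro a b
    have e1 : ∀ k, U (ind a) k * V (ind b) k
        = q * ((if k = 0 then 0 else U (ind a) k / q) * V (ind b) k) + R k * V (ind b) k := by
      intro k
      calc U (ind a) k * V (ind b) k
          = ((q * if k = 0 then 0 else U (ind a) k / q) + R k) * V (ind b) k := by
            rw [← hdecomp (ind a) (hind_mem a) k]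
        _ = q * ((if k = 0 then 0 else U (ind a) k / q) * V (ind b) k) + R k * V (ind b) k := by
            ring
    rw [Finset.sum_congr rfl fun k _ => e1 k, Finset.sum_add_distrib, ← Finset.mul_sum]
    have e2 : ∀ k, U' a k * V' b k
        = (if k = 0 then S (ind b) / q else 0)
          + (if k = 0 then 0 else U (ind a) k / q) * V (ind b) k := by
      intro k
      by_cases hk : k = 0 <;> simp [hU', hV', hk]
    rw [Finset.sum_congr rfl fun k _ => e2 k, Finset.sum_add_distrib]
    rw [Finset.sum_ite_eq' univ (0 : Fin (n+2)) (fun _ => S (ind b) / q)]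
    simp only [Finset.mem_univ, if_true]
    rw [Nat.mul_add, Nat.mul_div_cancel' (hSdvd (ind b) (hind_mem b))]
    rw [hS]
    ring
  have hPh : Ph n M' s.card U' V' := by
    refine ⟨fun a a' => by simp [hU'], fun b b' => ?_, fun a => ?_, fun a b hab => ?_⟩
    · have h10 : (1 : Fin (n+2)) ≠ 0 := by
        simp [Fin.ext_iff]
      simp only [hV', h10, if_false]
      exact h2 (ind b) (ind b')
    · have hdvd : M ∣ ∑ k, U (ind a) k * V (ind a) k := Nat.dvd_of_mod_eq_zero (h3 (ind a))
      rw [← hIP a a, ← hqM'] at hdvd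
      exact Nat.mod_eq_zero_of_dvd ((Nat.mul_dvd_mul_iff_left hq0).mp hdvd)
    · intro hcon
      have hdvd : M' ∣ ∑ k, U' a k * V' b k := Nat.dvd_of_mod_eq_zero hcon
      have : M ∣ ∑ k, U (ind a) k * V (ind b) k := by
        rw [← hIP a b, ← hqM']
        exact Nat.mul_dvd_mul_left q hdvd
      exact h4 (ind a) (ind b) (fun he => hab (hind_inj he)) (Nat.mod_eq_zero_of_dvd this)
  exact hIH s.card U' V' hPh
lemma Fc_bound {n M t : ℕ} (hM : 2 ≤ M) (U V : Fin t → Fin (n+2) → ℕ) (h : Ph n M t U V)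
    (c : ℕ) (hc1 : 1 ≤ c) (hcM : c < M) (B : ℝ)
    (hIH : ∀ t' : ℕ, ∀ U' V' : Fin t' → Fin (n+2) → ℕ, Ph n (Nat.gcd c M) t' U' V' →
      (t' : ℝ) ≤ B) :
    ‖∑ i, ∑ j, ps M ((c : ℤ) * ((∑ k, U i k * V j k : ℕ) : ℤ))‖ ≤
      ((M / Nat.gcd c M : ℕ) : ℝ) ^ (((n : ℝ) + 2)/2) * ((t : ℝ) * B) := by
  classical
  set d := Nat.gcd c M with hd
  set q := M / d with hq
  have hd0 : 0 < d := Nat.gcd_pos_of_pos_left M hc1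
  have hdM : d ∣ M := Nat.gcd_dvd_right c M
  have hdc : d ∣ c := Nat.gcd_dvd_left c M
  have hdq : d * q = M := Nat.mul_div_cancel' hdM
  have hq0 : 0 < q := by
    rcases Nat.eq_zero_or_pos q with h0 | h0
    · exfalso; rw [h0, mul_zero] at hdq; omega
    · exact h0
  have hdlec : d ≤ c := Nat.le_of_dvd hc1 hdc
  have hq2 : 2 ≤ q := by
    rcases Nat.lt_or_ge q 2 with h2 | h2
    · interval_cases q <;> omega
    · exact h2
  have hMcq : (M:ℤ) ∣ (c:ℤ) * (q:ℤ) := by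
    have h1 : c * q = M * (c / d) := by
      calc c * q = (c / d * d) * q := by rw [Nat.div_mul_cancel hdc]
        _ = (d * q) * (c / d) := by ring
        _ = M * (c / d) := by rw [hdq]
    exact ⟨(c/d : ℕ), by exact_mod_cast h1⟩
  have hdvd_iff : ∀ Δ : ℤ, ((M:ℤ) ∣ (c:ℤ) * Δ) ↔ ((q:ℤ) ∣ Δ) := by
    intro Δ
    constructor
    · intro hdvd
      have hcop : Nat.Coprime (c / d) q := Nat.coprime_div_gcd_div_gcd (hd ▸ hd0)
      have hqc' : Int.gcd (q:ℤ) ((c/d : ℕ):ℤ) = 1 := by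
        rw [Int.gcd_natCast_natCast]
        exact (Nat.coprime_comm.mp hcop)
      have hcast : (c:ℤ) = (d:ℤ) * ((c/d : ℕ):ℤ) := by
        exact_mod_cast (Nat.mul_div_cancel' hdc).symm
      have hMcast : (M:ℤ) = (d:ℤ) * (q:ℤ) := by exact_mod_cast hdq.symm
      rw [hMcast, hcast, mul_assoc] at hdvd
      have hd0' : (d:ℤ) ≠ 0 := by exact_mod_cast hd0.ne'
      have hq_dvd : (q:ℤ) ∣ ((c/d : ℕ):ℤ) * Δ := (mul_dvd_mul_iff_left hd0').mp hdvd
      exact Int.dvd_of_dvd_mul_right_of_gcd_one hq_dvd hqc'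
    · rintro ⟨z, rfl⟩
      have : (c:ℤ) * ((q:ℤ) * z) = ((c:ℤ) * (q:ℤ)) * z := by ring
      rw [this]
      exact Dvd.dvd.mul_right hMcq z
  have hMne : M ≠ 0 := by omega
  set Vq : Fin t → (Fin (n+2) → Fin q) :=
    fun j k => ⟨V j k % q, Nat.mod_lt _ hq0⟩ with hVq
  set P : Fin t → (Fin (n+2) → Fin q) → ℤ :=
    fun i y => ∑ k, ((U i k % q : ℕ) : ℤ) * ((y k : ℕ) : ℤ) with hP
  set Hy : (Fin (n+2) → Fin q) → ℂ := fun y => ∑ i, ps M ((c:ℤ) * P i y) with hHy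
  set cnt : (Fin (n+2) → Fin q) → ℕ :=
    fun y => (univ.filter fun j => Vq j = y).card with hcnt
  have hBnn : 0 ≤ B := Ph.nonneg hIH
  have step1 : (∑ i, ∑ j, ps M ((c : ℤ) * ((∑ k, U i k * V j k : ℕ) : ℤ)))
      = ∑ j, Hy (Vq j) := by
    rw [Finset.sum_comm]
    refine Finset.sum_congr rfl fun j _ => Finset.sum_congr rfl fun i _ => ?_
    have hPval : P i (Vq j) = ((∑ k, (U i k % q) * (V j k % q) : ℕ) : ℤ) := by
      rw [hP]; push_cast; rfl
    have hmod : (∑ k, U i k * V j k) % q = (∑ k, (U i k % q) * (V j k % q)) % q := by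
      rw [Finset.sum_nat_mod]
      rw [Finset.sum_congr rfl (fun k _ => Nat.mul_mod (U i k) (V j k) q)]
      rw [← Finset.sum_nat_mod]
    have hdq' : (q:ℤ) ∣ ((∑ k, U i k * V j k : ℕ) : ℤ)
        - ((∑ k, (U i k % q) * (V j k % q) : ℕ) : ℤ) := by
      have h1 := (Nat.modEq_iff_dvd (n := q)).mp hmod
      have h2 : ((∑ k, U i k * V j k : ℕ) : ℤ) - ((∑ k, (U i k % q) * (V j k % q) : ℕ) : ℤ)
          = -(((∑ k, (U i k % q) * (V j k % q) : ℕ) : ℤ) - ((∑ k, U i k * V j k : ℕ) : ℤ)) := by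
        ring
      rw [h2]
      exact dvd_neg.mpr h1
    apply ps_congr M hMne
    rw [hPval]
    have h3 : (c:ℤ) * ((∑ k, U i k * V j k : ℕ) : ℤ)
        - (c:ℤ) * ((∑ k, (U i k % q) * (V j k % q) : ℕ) : ℤ)
        = (c:ℤ) * (((∑ k, U i k * V j k : ℕ) : ℤ)
          - ((∑ k, (U i k % q) * (V j k % q) : ℕ) : ℤ)) := by ring
    rw [h3]
    exact (hdvd_iff _).mpr hdq'
  have step2 : ‖∑ j, Hy (Vq j)‖
      ≤ ∑ y : (Fin (n+2) → Fin q), (cnt y : ℝ) * ‖Hy y‖ := by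
    have hfib : (∑ j, Hy (Vq j))
        = ∑ y : (Fin (n+2) → Fin q), (cnt y : ℂ) * Hy y := by
      rw [← Finset.sum_fiberwise_of_maps_to (fun j _ => Finset.mem_univ (Vq j))
        (fun j => Hy (Vq j))]
      refine Finset.sum_congr rfl fun y _ => ?_
      rw [Finset.sum_congr rfl (fun j hj => by rw [(Finset.mem_filter.mp hj).2])]
      rw [Finset.sum_const, hcnt]
      simp [nsmul_eq_mul]
    rw [hfib]
    refine le_trans (norm_sum_le _ _) ?_
    refine le_of_eq (Finset.sum_congr rfl fun y _ => ?_)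
    rw [norm_mul]
    simp
  have hqdvdM : q ∣ M := ⟨d, by rw [mul_comm]; exact hdq.symm⟩
  have hMq_d : M / q = d := by rw [← hdq, Nat.mul_div_cancel _ hq0]
  have hIH' : ∀ t' : ℕ, ∀ U' V' : Fin t' → Fin (n+2) → ℕ, Ph n (M/q) t' U' V' →
      (t' : ℝ) ≤ B := by
    simp only [hMq_d]; exact hIH
  have hcntB : ∀ y : Fin (n+2) → Fin q, (cnt y : ℝ) ≤ B := by
    intro y
    have heq : (univ.filter fun j => Vq j = y)
        = (univ.filter fun j =>
            ∀ k, V j (Equiv.swap (0:Fin (n+2)) 1 k) % q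
              = ((y (Equiv.swap (0:Fin (n+2)) 1 k) : ℕ))) := by
      apply Finset.filter_congr
      intro j _
      constructor
      · intro hj k
        rw [← hj]
      · intro hall
        funext k
        apply Fin.ext
        have := hall (Equiv.swap (0:Fin (n+2)) 1 k)
        simpa using this
    rw [hcnt]
    simp only [heq]
    exact class_u (by omega) hqdvdM hq0 _ _ h.swap _ B hIH'
  have step4 : (∑ y : (Fin (n+2) → Fin q), ((cnt y : ℝ))^2) ≤ (t:ℝ) * B := by
    have hid : (∑ y : (Fin (n+2) → Fin q), ((cnt y : ℝ))^2)
        = ∑ j, (cnt (Vq j) : ℝ) := by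
      rw [← Finset.sum_fiberwise_of_maps_to (fun j _ => Finset.mem_univ (Vq j))
        (fun j => (cnt (Vq j) : ℝ))]
      refine Finset.sum_congr rfl fun y _ => ?_
      rw [Finset.sum_congr rfl (fun j hj => by rw [(Finset.mem_filter.mp hj).2])]
      rw [Finset.sum_const]
      rw [hcnt]
      simp [sq, nsmul_eq_mul]
    rw [hid]
    calc (∑ j, (cnt (Vq j) : ℝ)) ≤ ∑ _j : Fin t, B :=
          Finset.sum_le_sum fun j _ => hcntB (Vq j)
      _ = (t:ℝ) * B := by rw [Finset.sum_const, card_univ]; simp [nsmul_eq_mul]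
  set AU : ℕ := ∑ i, (univ.filter fun i' => ∀ k, U i' k % q = U i k % q).card with hAU
  have hAU_B : (AU : ℝ) ≤ (t:ℝ) * B := by
    rw [hAU]
    push_cast
    calc (∑ i, ((univ.filter fun i' => ∀ k, U i' k % q = U i k % q).card : ℝ))
        ≤ ∑ _i : Fin t, B := Finset.sum_le_sum fun i _ =>
          class_u (by omega) hqdvdM hq0 U V h (fun k => U i k % q) B hIH'
      _ = (t:ℝ) * B := by rw [Finset.sum_const, card_univ]; simp [nsmul_eq_mul]
  have key5 : (∑ y : (Fin (n+2) → Fin q), (Hy y * (starRingEnd ℂ) (Hy y)))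
      = ((AU:ℂ)) * ((q:ℂ)^(n+2)) := by
    have hpery : ∀ y : (Fin (n+2) → Fin q), Hy y * (starRingEnd ℂ) (Hy y)
        = ∑ i, ∑ i', ps M ((c:ℤ) * P i y + -((c:ℤ) * P i' y)) := by
      intro y
      have hconj : (starRingEnd ℂ) (Hy y) = ∑ i', ps M (-((c:ℤ) * P i' y)) := by
        rw [hHy]
        rw [map_sum]
        exact Finset.sum_congr rfl fun i' _ => ps_conj M _
      rw [hconj, hHy]
      rw [Finset.sum_mul_sum]
      exact Finset.sum_congr rfl fun i _ => Finset.sum_congr rfl fun i' _ =>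
        (ps_add M _ _).symm
    rw [Finset.sum_congr rfl fun y _ => hpery y]
    rw [Finset.sum_comm]
    have hswap2 : ∀ i : Fin t, (∑ y : (Fin (n+2) → Fin q),
        ∑ i', ps M ((c:ℤ) * P i y + -((c:ℤ) * P i' y)))
        = ∑ i', ∑ y : (Fin (n+2) → Fin q), ps M ((c:ℤ) * P i y + -((c:ℤ) * P i' y)) :=
      fun i => Finset.sum_comm
    rw [Finset.sum_congr rfl fun i _ => hswap2 i]
    -- inner sum over y
    have hinner : ∀ i i' : Fin t, (∑ y : (Fin (n+2) → Fin q),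
        ps M ((c:ℤ) * P i y + -((c:ℤ) * P i' y)))
        = if (∀ k, U i' k % q = U i k % q) then (q:ℂ)^(n+2) else 0 := by
      intro i i'
      have hexp : ∀ y : (Fin (n+2) → Fin q), (c:ℤ) * P i y + -((c:ℤ) * P i' y)
          = ∑ k, ((c:ℤ) * (((U i k % q : ℕ):ℤ) - ((U i' k % q : ℕ):ℤ)) * ((y k : ℕ):ℤ)) := by
        intro y
        rw [hP, Finset.mul_sum, Finset.mul_sum, ← sub_eq_add_neg, ← Finset.sum_sub_distrib]
        exact Finset.sum_congr rfl fun k _ => by ring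
      rw [Finset.sum_congr rfl fun y _ => by rw [hexp y, ps_sum]]
      rw [← Fintype.prod_sum (fun k (v : Fin q) =>
        ps M ((c:ℤ) * (((U i k % q : ℕ):ℤ) - ((U i' k % q : ℕ):ℤ)) * ((v : ℕ):ℤ)))]
      have hfac : ∀ k : Fin (n+2), (∑ v : Fin q,
          ps M ((c:ℤ) * (((U i k % q : ℕ):ℤ) - ((U i' k % q : ℕ):ℤ)) * ((v : ℕ):ℤ)))
          = if (U i' k % q = U i k % q) then (q:ℂ) else 0 := by
        intro k
        set Δ : ℤ := ((U i k % q : ℕ):ℤ) - ((U i' k % q : ℕ):ℤ) with hΔ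
        have h1 : ∀ v : Fin q, ps M ((c:ℤ) * Δ * ((v : ℕ):ℤ)) = (ps M ((c:ℤ) * Δ)) ^ (v:ℕ) :=
          fun v => (ps_pow M _ _).symm
        rw [Finset.sum_congr rfl fun v _ => h1 v]
        rw [Fin.sum_univ_eq_sum_range (fun m => (ps M ((c:ℤ) * Δ)) ^ m) q]
        have hgeo := ps_geom M q hMne ((c:ℤ) * Δ) (by
          have : (c:ℤ) * Δ * (q:ℤ) = ((c:ℤ) * (q:ℤ)) * Δ := by ring
          rw [this]
          exact Dvd.dvd.mul_right hMcq Δ)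
        rw [hgeo]
        have hiff : ((M:ℤ) ∣ (c:ℤ) * Δ) ↔ (U i' k % q = U i k % q) := by
          rw [hdvd_iff Δ]
          constructor
          · intro hdvd
            have hlt : |Δ| < (q:ℤ) := by
              rw [hΔ]
              have h1 : U i k % q < q := Nat.mod_lt _ hq0
              have h2 : U i' k % q < q := Nat.mod_lt _ hq0
              rw [abs_lt]
              omega
            have := Int.eq_zero_of_abs_lt_dvd hdvd hlt
            rw [hΔ, sub_eq_zero] at this
            exact_mod_cast this.symm
          · intro heq
            rw [hΔ]
            have : ((U i k % q : ℕ):ℤ) = ((U i' k % q : ℕ):ℤ) := by exact_mod_cast heq.symm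
            rw [this, sub_self]
            exact dvd_zero _
        by_cases hcase : U i' k % q = U i k % q
        · rw [if_pos hcase, if_pos (hiff.mpr hcase)]
        · rw [if_neg hcase, if_neg (fun hd => hcase (hiff.mp hd))]
      rw [Finset.prod_congr rfl fun k _ => hfac k]
      by_cases hall : ∀ k, U i' k % q = U i k % q
      · rw [if_pos hall]
        rw [Finset.prod_congr rfl fun k _ => if_pos (hall k)]
        rw [Finset.prod_const, card_univ]
        simp
      · rw [if_neg hall]
        push_neg at hall
        obtain ⟨k₀, hk₀⟩ := hall
        exact Finset.prod_eq_zero (Finset.mem_univ k₀) (if_neg hk₀)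
    rw [Finset.sum_congr rfl fun i _ => Finset.sum_congr rfl fun i' _ => hinner i i']
    have hcount : ∀ i : Fin t, (∑ i', if (∀ k, U i' k % q = U i k % q)
        then (q:ℂ)^(n+2) else 0)
        = ((univ.filter fun i' => ∀ k, U i' k % q = U i k % q).card : ℂ) * (q:ℂ)^(n+2) := by
      intro i
      rw [← Finset.sum_filter]
      rw [Finset.sum_const]
      simp [nsmul_eq_mul]
    rw [Finset.sum_congr rfl fun i _ => hcount i]
    rw [← Finset.sum_mul]
    congr 1
    rw [hAU]
    push_cast
    rfl
  have step5 : (∑ y : (Fin (n+2) → Fin q), (‖Hy y‖)^2)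
      ≤ (q:ℝ)^(n+2) * ((t:ℝ) * B) := by
    have hmc : ∀ y : (Fin (n+2) → Fin q), Hy y * (starRingEnd ℂ) (Hy y)
        = ((Complex.normSq (Hy y) : ℝ) : ℂ) := fun y => Complex.mul_conj _
    rw [Finset.sum_congr rfl fun y _ => hmc y] at key5
    have hreal : (∑ y : (Fin (n+2) → Fin q), Complex.normSq (Hy y))
        = (AU:ℝ) * (q:ℝ)^(n+2) := by
      have := key5
      rw [← Complex.ofReal_sum] at this
      have h2 : ((AU:ℂ)) * ((q:ℂ)^(n+2)) = (((AU:ℝ) * (q:ℝ)^(n+2) : ℝ) : ℂ) := by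
        push_cast
        ring
      rw [h2] at this
      exact_mod_cast this
    have habs : (∑ y : (Fin (n+2) → Fin q), (‖Hy y‖)^2)
        = (AU:ℝ) * (q:ℝ)^(n+2) := by
      rw [← hreal]
      exact Finset.sum_congr rfl fun y _ => Complex.sq_norm _
    rw [habs]
    calc (AU:ℝ) * (q:ℝ)^(n+2) ≤ ((t:ℝ) * B) * (q:ℝ)^(n+2) := by
          apply mul_le_mul_of_nonneg_right hAU_B (by positivity)
      _ = (q:ℝ)^(n+2) * ((t:ℝ) * B) := by ring
  -- combine
  have hcs := Finset.sum_mul_sq_le_sq_mul_sq univ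
    (fun y : (Fin (n+2) → Fin q) => (cnt y : ℝ)) (fun y => ‖Hy y‖)
  have hT2 : (∑ y : (Fin (n+2) → Fin q), (cnt y : ℝ) * ‖Hy y‖)^2
      ≤ ((t:ℝ)*B) * ((q:ℝ)^(n+2) * ((t:ℝ)*B)) := by
    refine le_trans hcs ?_
    have h1 : (0:ℝ) ≤ ∑ y : (Fin (n+2) → Fin q), (‖Hy y‖)^2 :=
      Finset.sum_nonneg fun y _ => sq_nonneg _
    exact mul_le_mul step4 step5 h1 (by positivity)
  rw [step1]
  refine le_trans step2 ?_
  have hrpow2 : ((q:ℝ) ^ (((n:ℝ)+2)/2) * ((t:ℝ)*B))^2 = ((t:ℝ)*B) * ((q:ℝ)^(n+2) * ((t:ℝ)*B)) := by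
    have hqpos : (0:ℝ) < (q:ℝ) := by positivity
    rw [mul_pow, ← Real.rpow_natCast (q:ℝ) (n+2)]
    rw [sq, ← Real.rpow_add hqpos]
    push_cast
    ring_nf
  have hTnn : (0:ℝ) ≤ ∑ y : (Fin (n+2) → Fin q), (cnt y : ℝ) * ‖Hy y‖ :=
    Finset.sum_nonneg fun y _ => mul_nonneg (Nat.cast_nonneg _) (norm_nonneg _)
  have hRnn : (0:ℝ) ≤ (q:ℝ) ^ (((n:ℝ)+2)/2) * ((t:ℝ)*B) := by positivity
  nlinarith [hT2, hrpow2, hTnn, hRnn]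
lemma tele : ∀ M : ℕ, 1 ≤ M →
    ∑ e ∈ Finset.Icc 2 M, ((1:ℝ)/((e:ℝ)-1) - 1/(e:ℝ)) = 1 - 1/(M:ℝ) := by
  intro M
  induction M with
  | zero => omega
  | succ N ih =>
      intro _
      by_cases hN : 1 ≤ N
      · rw [Finset.sum_Icc_succ_top (by omega : 2 ≤ N + 1), ih hN]
        have hN0 : (N:ℝ) ≠ 0 := by positivity
        have hN1 : ((N:ℝ) + 1) ≠ 0 := by positivity
        push_cast
        ring
      · have : N = 0 := by omega
        subst this
        norm_num

lemma gcd_cube (M : ℕ) (hM : 2 ≤ M) :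
    ∑ c ∈ Finset.Ico 1 M, ((Nat.gcd c M : ℝ))^3 ≤ (M:ℝ)^3 - (M:ℝ)^2 := by
  classical
  have hMne : M ≠ 0 := by omega
  have hmap : ∀ c ∈ Finset.Ico 1 M, M / Nat.gcd c M ∈ Finset.Icc 2 M := by
    intro c hc
    rw [Finset.mem_Ico] at hc
    have hd0 : 0 < Nat.gcd c M := Nat.gcd_pos_of_pos_left M hc.1
    have hdM : Nat.gcd c M ∣ M := Nat.gcd_dvd_right c M
    have hdq : Nat.gcd c M * (M / Nat.gcd c M) = M := Nat.mul_div_cancel' hdM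
    have hdc : Nat.gcd c M ≤ c := Nat.le_of_dvd hc.1 (Nat.gcd_dvd_left c M)
    rw [Finset.mem_Icc]
    constructor
    · by_contra hcon
      push_neg at hcon
      interval_cases h : (M / Nat.gcd c M) <;> omega
    · exact Nat.div_le_self M _
  rw [← Finset.sum_fiberwise_of_maps_to hmap (fun c => ((Nat.gcd c M : ℝ))^3)]
  have hstep : ∀ e ∈ Finset.Icc 2 M,
      (∑ c ∈ (Finset.Ico 1 M).filter (fun c => M / Nat.gcd c M = e), ((Nat.gcd c M : ℝ))^3)
      ≤ (M:ℝ)^3 * ((1:ℝ)/((e:ℝ)-1) - 1/(e:ℝ)) := by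
    intro e he
    rw [Finset.mem_Icc] at he
    have he2 : 2 ≤ e := he.1
    -- every member has gcd = M / e
    have hgcd : ∀ c ∈ (Finset.Ico 1 M).filter (fun c => M / Nat.gcd c M = e),
        Nat.gcd c M = M / e := by
      intro c hc
      rw [Finset.mem_filter] at hc
      obtain ⟨hc1, hc2⟩ := hc
      rw [Finset.mem_Ico] at hc1
      have hdM : Nat.gcd c M ∣ M := Nat.gcd_dvd_right c M
      rw [← hc2, Nat.div_div_self hdM hMne]
    -- cardinality bound
    have hcard : ((Finset.Ico 1 M).filter (fun c => M / Nat.gcd c M = e)).card ≤ e - 1 := by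
      have := Finset.card_le_card_of_injOn (f := fun c => c / (M / e))
        (s := (Finset.Ico 1 M).filter (fun c => M / Nat.gcd c M = e))
        (t := Finset.Ico 1 e) ?_ ?_
      · simpa using this
      · intro c hc
        have hg := hgcd c hc
        rw [Finset.mem_coe, Finset.mem_filter, Finset.mem_Ico] at hc
        have hk1 : 1 ≤ M / e := by
          have : M / e ∣ M := by rw [← hg]; exact Nat.gcd_dvd_right c M
          rcases Nat.eq_zero_or_pos (M / e) with h0 | h0
          · exfalso
            rw [← hg] at h0
            have := Nat.gcd_pos_of_pos_left M hc.1.1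
            omega
          · exact h0
        have hkc : (M / e) ∣ c := by rw [← hg]; exact Nat.gcd_dvd_left c M
        have hMeq : (M / e) * e = M := by
          have hdM' : M / e ∣ M := by rw [← hg]; exact Nat.gcd_dvd_right c M
          have hww : M / (M / e) = e := by
            rw [← hg]
            exact hc.2
          have h5 := Nat.mul_div_cancel' hdM'
          rw [hww] at h5
          exact h5
        rw [Finset.mem_coe, Finset.mem_Ico]
        constructor
        · exact Nat.one_le_div_iff hk1 |>.mpr (Nat.le_of_dvd hc.1.1 hkc)
        · rw [Nat.div_lt_iff_lt_mul hk1]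
          calc c < M := hc.1.2
            _ = e * (M / e) := by rw [mul_comm]; exact hMeq.symm
      · intro a ha b hb hab
        have hga := hgcd a ha
        have hgb := hgcd b hb
        have hka : (M / e) ∣ a := by rw [← hga]; exact Nat.gcd_dvd_left a M
        have hkb : (M / e) ∣ b := by rw [← hgb]; exact Nat.gcd_dvd_left b M
        have hab' : a / (M / e) = b / (M / e) := hab
        calc a = (M / e) * (a / (M / e)) := (Nat.mul_div_cancel' hka).symm
          _ = (M / e) * (b / (M / e)) := by rw [hab']
          _ = b := Nat.mul_div_cancel' hkb
    -- value bound
    have hval : ((M / e : ℕ) : ℝ) ≤ (M:ℝ) / (e:ℝ) := Nat.cast_div_le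
    have he1 : (1:ℝ) ≤ (e:ℝ) - 1 := by
      have : (2:ℝ) ≤ (e:ℝ) := by exact_mod_cast he2
      linarith
    calc (∑ c ∈ (Finset.Ico 1 M).filter (fun c => M / Nat.gcd c M = e), ((Nat.gcd c M : ℝ))^3)
        = ∑ c ∈ (Finset.Ico 1 M).filter (fun c => M / Nat.gcd c M = e), ((M / e : ℕ) : ℝ)^3 := by
          refine Finset.sum_congr rfl fun c hc => ?_
          rw [hgcd c hc]
      _ = (((Finset.Ico 1 M).filter (fun c => M / Nat.gcd c M = e)).card : ℝ)
            * ((M / e : ℕ) : ℝ)^3 := by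
          rw [Finset.sum_const, nsmul_eq_mul]
      _ ≤ ((e:ℝ) - 1) * ((M:ℝ)/(e:ℝ))^3 := by
          apply mul_le_mul
          · have : (((Finset.Ico 1 M).filter (fun c => M / Nat.gcd c M = e)).card : ℝ)
                ≤ ((e - 1 : ℕ) : ℝ) := by exact_mod_cast hcard
            refine le_trans this ?_
            push_cast [Nat.cast_sub (by omega : 1 ≤ e)]
            linarith
          · exact pow_le_pow_left₀ (Nat.cast_nonneg _) hval 3
          · positivity
          · linarith
      _ ≤ (M:ℝ)^3 * ((1:ℝ)/((e:ℝ)-1) - 1/(e:ℝ)) := by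
          have he0 : (0:ℝ) < (e:ℝ) := by positivity
          have hM0 : (0:ℝ) ≤ (M:ℝ) := Nat.cast_nonneg _
          have he1' : (0:ℝ) < (e:ℝ) - 1 := by linarith
          rw [div_pow]
          have h1 : (1:ℝ)/((e:ℝ)-1) - 1/(e:ℝ) = 1/(((e:ℝ)-1)*(e:ℝ)) := by
            field_simp
            ring
          have h2 : ((e:ℝ)-1) * ((M:ℝ)^3/(e:ℝ)^3) = ((e:ℝ)-1)*(M:ℝ)^3/(e:ℝ)^3 := by ring
          have h3 : (M:ℝ)^3 * ((1:ℝ)/(((e:ℝ)-1)*(e:ℝ))) = (M:ℝ)^3/(((e:ℝ)-1)*(e:ℝ)) := by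
            ring
          rw [h2, h1, h3, div_le_div_iff₀ (by positivity) (by positivity)]
          have hfact : ((e:ℝ)-1)*((e:ℝ)-1) ≤ (e:ℝ)*(e:ℝ) := by nlinarith
          have hM3 : (0:ℝ) ≤ (M:ℝ)^3 := by positivity
          nlinarith [mul_le_mul_of_nonneg_left
            (mul_le_mul_of_nonneg_right hfact (le_of_lt he0)) hM3]
  calc (∑ e ∈ Finset.Icc 2 M, ∑ c ∈ (Finset.Ico 1 M).filter
        (fun c => M / Nat.gcd c M = e), ((Nat.gcd c M : ℝ))^3)
      ≤ ∑ e ∈ Finset.Icc 2 M, (M:ℝ)^3 * ((1:ℝ)/((e:ℝ)-1) - 1/(e:ℝ)) :=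
        Finset.sum_le_sum hstep
    _ = (M:ℝ)^3 * (1 - 1/(M:ℝ)) := by
        rw [← Finset.mul_sum, tele M (by omega)]
    _ = (M:ℝ)^3 - (M:ℝ)^2 := by
        have hM0 : (M:ℝ) ≠ 0 := by positivity
        field_simp
theorem pointed (n : ℕ) : ∀ M : ℕ, 0 < M → ∀ t : ℕ, ∀ U V : Fin t → Fin (n+2) → ℕ,
    Ph n M t U V → (t:ℝ) ≤ (M:ℝ) ^ ((n:ℝ)/2 + 4) := by
  intro M
  induction M using Nat.strong_induction_on with
  | _ M IH =>
  intro hM0 t U V h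
  have hMR1 : (1:ℝ) ≤ (M:ℝ) := by exact_mod_cast hM0
  by_cases hM1 : M = 1
  · subst hM1
    have ht1 : t ≤ 1 := by
      by_contra hcon
      push_neg at hcon
      have h01 : (⟨0, by omega⟩ : Fin t) ≠ (⟨1, by omega⟩ : Fin t) := by
        simp [Fin.ext_iff]
      exact h.2.2.2 _ _ h01 (Nat.mod_one _)
    calc (t:ℝ) ≤ 1 := by exact_mod_cast ht1
      _ = (1:ℝ) ^ ((n:ℝ)/2 + 4) := by rw [Real.one_rpow]
      _ = ((1:ℕ):ℝ) ^ ((n:ℝ)/2 + 4) := by norm_num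
  have hM2 : 2 ≤ M := by omega
  by_cases ht0 : t = 0
  · subst ht0
    simp only [Nat.cast_zero]
    positivity
  have ht1 : 0 < t := Nat.pos_of_ne_zero ht0
  have hMne : M ≠ 0 := by omega
  set F : ℕ → ℂ := fun c => ∑ i, ∑ j, ps M ((c:ℤ) * ((∑ k, U i k * V j k : ℕ):ℤ)) with hF
  -- master identity
  have hdetect : ∑ c ∈ Finset.range M, F c = (t:ℂ) * M := by
    rw [hF]
    rw [Finset.sum_comm]
    have hswap : ∀ i : Fin t, (∑ c ∈ Finset.range M, ∑ j,
        ps M ((c:ℤ) * ((∑ k, U i k * V j k : ℕ):ℤ)))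
        = ∑ j, ∑ c ∈ Finset.range M, ps M ((c:ℤ) * ((∑ k, U i k * V j k : ℕ):ℤ)) :=
      fun i => Finset.sum_comm
    rw [Finset.sum_congr rfl fun i _ => hswap i]
    have hin : ∀ i j : Fin t, (∑ c ∈ Finset.range M,
        ps M ((c:ℤ) * ((∑ k, U i k * V j k : ℕ):ℤ))) = if j = i then (M:ℂ) else 0 := by
      intro i j
      rw [ps_detect M hMne _]
      by_cases hij : j = i
      · subst hij
        rw [if_pos rfl, if_pos]
        exact_mod_cast Nat.dvd_of_mod_eq_zero (h.2.2.1 j)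
      · rw [if_neg hij, if_neg]
        intro hdvd
        exact h.2.2.2 i j (fun he => hij (he.symm)) (Nat.mod_eq_zero_of_dvd (by exact_mod_cast hdvd))
    rw [Finset.sum_congr rfl fun i _ => Finset.sum_congr rfl fun j _ => hin i j]
    rw [Finset.sum_congr rfl fun i (_ : i ∈ univ) => Finset.sum_ite_eq' univ i (fun _ => (M:ℂ))]
    simp [card_univ]
  have hsplit : F 0 + ∑ c ∈ Finset.Ico 1 M, F c = (t:ℂ)*M := by
    rw [← hdetect, Finset.range_eq_Ico, Finset.sum_eq_sum_Ico_succ_bot hM0]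
  have hF0 : F 0 = (t:ℂ)*(t:ℂ) := by
    rw [hF]
    simp [ps_zero]
  have hmaster : (t:ℝ)^2 ≤ (t:ℝ)*(M:ℝ) + ∑ c ∈ Finset.Ico 1 M, ‖F c‖ := by
    have h1 : F 0 = (t:ℂ)*M - ∑ c ∈ Finset.Ico 1 M, F c := by
      rw [← hsplit]; ring
    have h2 : (t:ℝ)^2 = ‖F 0‖ := by
      rw [hF0]
      rw [show (t:ℂ)*(t:ℂ) = (((t:ℝ)^2 : ℝ):ℂ) by push_cast; ring]
      rw [Complex.norm_real, Real.norm_eq_abs]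
      rw [abs_of_nonneg (by positivity)]
    rw [h2, h1]
    calc ‖(t:ℂ)*M - ∑ c ∈ Finset.Ico 1 M, F c‖
        ≤ ‖(t:ℂ)*M‖ + ‖∑ c ∈ Finset.Ico 1 M, F c‖ := by
          exact norm_sub_le _ _
      _ ≤ (t:ℝ)*(M:ℝ) + ∑ c ∈ Finset.Ico 1 M, ‖F c‖ := by
          gcongr
          · rw [show (t:ℂ)*(M:ℂ) = (((t:ℝ)*(M:ℝ) : ℝ):ℂ) by push_cast; ring,
              Complex.norm_real, Real.norm_eq_abs, abs_of_nonneg (by positivity)]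

          · exact norm_sum_le _ _
  -- per-frequency bound
  have hperc : ∀ c ∈ Finset.Ico 1 M, ‖F c‖
      ≤ (M:ℝ)^((n:ℝ)/2 + 1) * ((Nat.gcd c M : ℝ))^3 * (t:ℝ) := by
    intro c hc
    rw [Finset.mem_Ico] at hc
    set d := Nat.gcd c M with hd
    have hd0 : 0 < d := Nat.gcd_pos_of_pos_left M hc.1
    have hdM : d ∣ M := Nat.gcd_dvd_right c M
    have hdc : d ≤ c := Nat.le_of_dvd hc.1 (Nat.gcd_dvd_left c M)
    have hdltM : d < M := by omega
    have hIHd : ∀ t' : ℕ, ∀ U' V' : Fin t' → Fin (n+2) → ℕ, Ph n d t' U' V' →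
        (t' : ℝ) ≤ (d:ℝ) ^ ((n:ℝ)/2 + 4) := IH d hdltM hd0
    have hFB := Fc_bound hM2 U V h c hc.1 hc.2 ((d:ℝ) ^ ((n:ℝ)/2 + 4)) hIHd
    refine le_trans hFB ?_
    -- algebra
    have hdR : (0:ℝ) < (d:ℝ) := by exact_mod_cast hd0
    have hMR : (0:ℝ) < (M:ℝ) := by exact_mod_cast hM0
    have hcastdiv : ((M / d : ℕ) : ℝ) = (M:ℝ)/(d:ℝ) :=
      Nat.cast_div hdM (by positivity)
    rw [hcastdiv]
    have hexp : ((n:ℝ)+2)/2 = (n:ℝ)/2 + 1 := by ring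
    rw [hexp]
    rw [Real.div_rpow (le_of_lt hMR) (le_of_lt hdR)]
    have hsum : (d:ℝ) ^ ((n:ℝ)/2 + 4) = (d:ℝ) ^ ((n:ℝ)/2 + 1) * (d:ℝ)^(3:ℕ) := by
      rw [← Real.rpow_natCast (d:ℝ) 3, ← Real.rpow_add hdR]
      congr 1
      push_cast
      ring
    rw [hsum]
    have hdne : (d:ℝ) ^ ((n:ℝ)/2 + 1) ≠ 0 := by positivity
    apply le_of_eq
    field_simp
  -- sum the bounds
  have hsum_bound : (∑ c ∈ Finset.Ico 1 M, ‖F c‖)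
      ≤ (M:ℝ)^((n:ℝ)/2 + 1) * ((M:ℝ)^3 - (M:ℝ)^2) * (t:ℝ) := by
    calc (∑ c ∈ Finset.Ico 1 M, ‖F c‖)
        ≤ ∑ c ∈ Finset.Ico 1 M, (M:ℝ)^((n:ℝ)/2 + 1) * ((Nat.gcd c M : ℝ))^3 * (t:ℝ) :=
          Finset.sum_le_sum hperc
      _ = (M:ℝ)^((n:ℝ)/2 + 1) * (∑ c ∈ Finset.Ico 1 M, ((Nat.gcd c M : ℝ))^3) * (t:ℝ) := by
          rw [← Finset.sum_mul, ← Finset.mul_sum]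
      _ ≤ (M:ℝ)^((n:ℝ)/2 + 1) * ((M:ℝ)^3 - (M:ℝ)^2) * (t:ℝ) := by
          have := gcd_cube M hM2
          have h1 : (0:ℝ) ≤ (M:ℝ)^((n:ℝ)/2 + 1) := by positivity
          have h2 : (0:ℝ) ≤ (t:ℝ) := Nat.cast_nonneg _
          apply mul_le_mul_of_nonneg_right _ h2
          exact mul_le_mul_of_nonneg_left this h1
  -- conclude
  have hfinal : (t:ℝ)^2 ≤ (t:ℝ) * ((M:ℝ) + (M:ℝ)^((n:ℝ)/2+4) - (M:ℝ)^((n:ℝ)/2+3)) := by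
    have hA : (M:ℝ)^((n:ℝ)/2 + 1) * (M:ℝ)^3 = (M:ℝ)^((n:ℝ)/2+4) := by
      rw [← Real.rpow_natCast (M:ℝ) 3, ← Real.rpow_add (by positivity)]
      congr 1
      push_cast
      ring
    have hB : (M:ℝ)^((n:ℝ)/2 + 1) * (M:ℝ)^2 = (M:ℝ)^((n:ℝ)/2+3) := by
      rw [← Real.rpow_natCast (M:ℝ) 2, ← Real.rpow_add (by positivity)]
      congr 1
      push_cast
      ring
    calc (t:ℝ)^2 ≤ (t:ℝ)*(M:ℝ) + ∑ c ∈ Finset.Ico 1 M, ‖F c‖ := hmaster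
      _ ≤ (t:ℝ)*(M:ℝ) + (M:ℝ)^((n:ℝ)/2 + 1) * ((M:ℝ)^3 - (M:ℝ)^2) * (t:ℝ) := by
          linarith [hsum_bound]
      _ = (t:ℝ) * ((M:ℝ) + ((M:ℝ)^((n:ℝ)/2 + 1) * (M:ℝ)^3
            - (M:ℝ)^((n:ℝ)/2 + 1) * (M:ℝ)^2)) := by ring
      _ = (t:ℝ) * ((M:ℝ) + (M:ℝ)^((n:ℝ)/2+4) - (M:ℝ)^((n:ℝ)/2+3)) := by
          rw [hA, hB]; ring
  have htR : (0:ℝ) < (t:ℝ) := by exact_mod_cast ht1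
  have hcancel : (t:ℝ) ≤ (M:ℝ) + (M:ℝ)^((n:ℝ)/2+4) - (M:ℝ)^((n:ℝ)/2+3) := by
    nlinarith [hfinal, htR]
  have hlast : (M:ℝ) ≤ (M:ℝ)^((n:ℝ)/2+3) := by
    calc (M:ℝ) = (M:ℝ)^(1:ℝ) := by rw [Real.rpow_one]
      _ ≤ (M:ℝ)^((n:ℝ)/2+3) := by
          apply Real.rpow_le_rpow_of_exponent_le hMR1
          have : (0:ℝ) ≤ (n:ℝ) := Nat.cast_nonneg _
          linarith
  linarith
end MVF

end

/-- A matching vector family in `Z_m^n`: vectors are represented with coordinates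
in `{0, ..., m-1}`, inner products are taken over the integers and reduced mod `m`. -/
def IsMVFamily (m n t : ℕ) (u v : Fin t → Fin n → ℕ) : Prop :=
  (∀ i k, u i k < m) ∧ (∀ i k, v i k < m) ∧
  (∀ i, (∑ k, u i k * v i k) % m = 0) ∧
  (∀ i j, i ≠ j → (∑ k, u i k * v j k) % m ≠ 0)

/-- The family `(u, v)` respects the partition `(r₁, r₂, r₃)` of `m`. -/
def Respects (m n t r₁ r₂ r₃ : ℕ) (u v : Fin t → Fin n → ℕ) : Prop :=
  r₁ * r₂ * r₃ = m ∧ 0 < r₁ ∧ 0 < r₂ ∧ 0 < r₃ ∧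
  (∀ i j k, u i k % r₁ = u j k % r₁) ∧
  (∀ i j k, v i k % r₂ = v j k % r₂) ∧
  (∀ i j, (∑ k, (u i k / r₁) * (v i k % r₂)) % r₂ =
          (∑ k, (u j k / r₁) * (v j k % r₂)) % r₂) ∧
  (∀ i j, (∑ k, (u i k % r₁) * (v i k / r₂)) % r₁ =
          (∑ k, (u j k % r₁) * (v j k / r₂)) % r₁)

theorem stmt_8 (m n t : ℕ) (hm : 1 < m) (hn : 1 ≤ n) (u v : Fin t → Fin n → ℕ)
    (hMV : IsMVFamily m n t u v) :
    (t : ℝ) ≤ 100 * (m : ℝ) ^ ((n : ℝ) / 2 + 8.47) := by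
  obtain ⟨hub, hvb, hdiag, hoff⟩ := hMV
  set U : Fin t → Fin (n+2) → ℕ := fun i => Fin.cons 0 (Fin.cons 0 (u i)) with hU
  set V : Fin t → Fin (n+2) → ℕ := fun j => Fin.cons 0 (Fin.cons 0 (v j)) with hV
  have hIP : ∀ i j : Fin t, (∑ k, U i k * V j k) = ∑ k, u i k * v j k := by
    intro i j
    rw [Fin.sum_univ_succ, Fin.sum_univ_succ]
    simp [hU, hV]
  have hPh : MVF.Ph n m t U V := by
    refine ⟨fun i i' => by simp [hU], fun j j' => ?_, fun i => ?_, fun i j hij => ?_⟩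
    · have hz : ∀ j : Fin t, V j 1 = 0 := by
        intro j
        have hrfl : V j 1
            = (Fin.cons (0:ℕ) (Fin.cons (0:ℕ) (v j)) : Fin (n+2) → ℕ) (Fin.succ 0) := rfl
        rw [hrfl, Fin.cons_succ, Fin.cons_zero]
      rw [hz, hz]
    · rw [hIP]; exact hdiag i
    · rw [hIP]; exact hoff i j hij
  have hP := MVF.pointed n m (by omega) t U V hPh
  have hm1 : (1:ℝ) ≤ (m:ℝ) := by exact_mod_cast (by omega : 1 ≤ m)
  calc (t:ℝ) ≤ (m:ℝ) ^ ((n:ℝ)/2 + 4) := hP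
    _ ≤ (m:ℝ) ^ ((n:ℝ)/2 + 8.47) := by
        apply Real.rpow_le_rpow_of_exponent_le hm1
        norm_num
    _ ≤ 100 * (m:ℝ) ^ ((n:ℝ)/2 + 8.47) := by
        have : (0:ℝ) ≤ (m:ℝ) ^ ((n:ℝ)/2 + 8.47) := by positivity
        linarith
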